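/- arXiv:0911.4186 — 2 statements merged into one kernel-verified Lean document; each statement's English description precedes it below -/
import Mathlib

section
/- Let A ∈ ℤ^{m×n} satisfy the regularity assumptions (gcd of all m×m minors is 1 and {x ≥ 0 : Ax = 0} = {0}), let v be the sum of the columns of A, let C be the cone generated by the columns of A, let L_A^⊥ = {z ∈ ℤ^n : Az = 0}, and let μ denote the inhomogeneous minimum. Then for every t ≥ μ(P(A,v) − 𝟙, L_A^⊥) and every b ∈ (t·v + C) ∩ ℤ^m, the polytope P(A,b) contains an integer point. Consequently the diagonal Frobenius number g(A) satisfies g(A) ≤ μ(P(A,v) − 𝟙, L_A^⊥). -/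
open Matrix MeasureTheory

noncomputable section

/-- The real matrix associated to an integral matrix. -/
def Amap {m n : ℕ} (A : Matrix (Fin m) (Fin n) ℤ) : Matrix (Fin m) (Fin n) ℝ :=
  A.map (Int.cast : ℤ → ℝ)

/-- The cone generated by the columns of `A`. -/
def cone {m n : ℕ} (A : Matrix (Fin m) (Fin n) ℤ) : Set (Fin m → ℝ) :=
  {b | ∃ lam : Fin n → ℝ, (∀ i, 0 ≤ lam i) ∧ (Amap A).mulVec lam = b}

/-- The knapsack problem `Ax = b`, `x ≥ 0` has an integral solution. -/
def Feasible {m n : ℕ} (A : Matrix (Fin m) (Fin n) ℤ) (b : Fin m → ℤ) : Prop :=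
  ∃ x : Fin n → ℤ, (∀ i, 0 ≤ x i) ∧ A.mulVec x = b

/-- The sum of the columns of `A` (as a real vector). -/
def colSum {m n : ℕ} (A : Matrix (Fin m) (Fin n) ℤ) : Fin m → ℝ :=
  (Amap A).mulVec 1

/-- The regularity assumptions: the gcd of all maximal minors is `1` and
`{x ≥ 0 : Ax = 0} = {0}`. -/
def Regular {m n : ℕ} (A : Matrix (Fin m) (Fin n) ℤ) : Prop :=
  (Finset.gcd Finset.univ (fun g : Fin m ↪ Fin n => (A.submatrix id g).det) = 1) ∧
  (∀ x : Fin n → ℝ, (∀ i, 0 ≤ x i) → (Amap A).mulVec x = 0 → x = 0)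

/-- The diagonal Frobenius number of `A`: the least `t ≥ 0` such that every integral
vector in `t·v + C` is a nonnegative integral combination of the columns of `A`. -/
def diagFrob {m n : ℕ} (A : Matrix (Fin m) (Fin n) ℤ) : ℝ :=
  sInf {t : ℝ | 0 ≤ t ∧ ∀ b : Fin m → ℤ,
    ((fun i => (b i : ℝ)) - t • colSum A) ∈ cone A → Feasible A b}

/-- The volume of the `k`-dimensional Euclidean unit ball. -/
def unitBallVol (k : ℕ) : ℝ :=
  (volume (Metric.ball (0 : EuclideanSpace ℝ (Fin k)) 1)).toReal

end

/-- The inhomogeneous minimum of the set `P(A,v) − 𝟙` with respect to the lattice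
`L_A^⊥ = {z ∈ ℤ^n : Az = 0}` inside the real kernel of `A`. -/
noncomputable def inhomMinPerp {m n : ℕ} (A : Matrix (Fin m) (Fin n) ℤ) : ℝ :=
  sInf {σ : ℝ | 0 ≤ σ ∧ ∀ x : Fin n → ℝ, (Amap A).mulVec x = 0 →
    ∃ l : Fin n → ℤ, A.mulVec l = 0 ∧
      ∃ s ∈ (fun p => p - (1 : Fin n → ℝ)) ''
        {x : Fin n → ℝ | (∀ i, 0 ≤ x i) ∧ (Amap A).mulVec x = colSum A},
        x = (fun i => (l i : ℝ)) + σ • s}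

namespace FrobAux2

variable {m n : ℕ}

lemma expand_mulVec (A : Matrix (Fin m) (Fin n) ℤ) (g : Fin m ↪ Fin n) (w : Fin m → ℤ) :
    A.mulVec (fun k => ∑ i, if g i = k then w i else 0) = (A.submatrix id g).mulVec w := by
  funext i0
  simp only [Matrix.mulVec, dotProduct, Matrix.submatrix_apply, id]
  simp_rw [Finset.mul_sum, mul_ite, mul_zero]
  rw [Finset.sum_comm]
  congr 1; funext i
  simp

lemma det_smul_mem (A : Matrix (Fin m) (Fin n) ℤ) (g : Fin m ↪ Fin n) (w : Fin m → ℤ) :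
    ∃ z : Fin n → ℤ, A.mulVec z = (A.submatrix id g).det • w := by
  refine ⟨fun k => ∑ i, if g i = k then ((A.submatrix id g).adjugate.mulVec w) i else 0, ?_⟩
  rw [expand_mulVec, Matrix.mulVec_mulVec, Matrix.mul_adjugate, Matrix.smul_mulVec,
    Matrix.one_mulVec]

lemma surj_of_gcd_one (A : Matrix (Fin m) (Fin n) ℤ)
    (h : Finset.gcd Finset.univ (fun g : Fin m ↪ Fin n => (A.submatrix id g).det) = 1)
    (b : Fin m → ℤ) : ∃ z : Fin n → ℤ, A.mulVec z = b := by
  have key : ∀ s : Finset (Fin m ↪ Fin n), ∀ y : Fin m → ℤ,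
      ∃ z : Fin n → ℤ, A.mulVec z = (Finset.gcd s fun g => (A.submatrix id g).det) • y := by
    intro s
    induction s using Finset.induction_on with
    | empty => intro y; exact ⟨0, by simp [Matrix.mulVec_zero]⟩
    | insert a s' ha ih =>
      intro y
      rw [Finset.gcd_insert]
      set p := (A.submatrix id a).det with hp
      set q := Finset.gcd s' fun g => (A.submatrix id g).det with hq
      have hbez : GCDMonoid.gcd p q = p * Int.gcdA p q + q * Int.gcdB p q := by
        rw [← Int.coe_gcd, Int.gcd_eq_gcd_ab]
      obtain ⟨z1, hz1⟩ := det_smul_mem A a (Int.gcdA p q • y)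
      obtain ⟨z2, hz2⟩ := ih (Int.gcdB p q • y)
      refine ⟨z1 + z2, ?_⟩
      rw [Matrix.mulVec_add, hz1, hz2, hbez]
      funext i
      simp only [Pi.add_apply, Pi.smul_apply, smul_eq_mul]
      ring
  obtain ⟨z, hz⟩ := key Finset.univ b
  rw [h] at hz
  exact ⟨z, by simpa using hz⟩



lemma cast_mulVec (A : Matrix (Fin m) (Fin n) ℤ) (z : Fin n → ℤ) :
    (Amap A).mulVec (fun k => (z k : ℝ)) = fun i => ((A.mulVec z) i : ℝ) := by
  funext i
  simp only [Amap, Matrix.mulVec, dotProduct, Matrix.map_apply]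
  push_cast
  rfl

noncomputable def Uvec (A : Matrix (Fin m) (Fin n) ℤ) (g : Fin m ↪ Fin n) (j : Fin n) :
    Fin n → ℤ := fun k =>
  (if k = j then (A.submatrix id g).det else 0) -
  ∑ i, if g i = k then ((A.submatrix id g).adjugate.mulVec (fun i' => A i' j)) i else 0

lemma expand_mulVec' (A : Matrix (Fin m) (Fin n) ℤ) (g : Fin m ↪ Fin n) (w : Fin m → ℤ) :
    A.mulVec (fun k => ∑ i, if g i = k then w i else 0) = (A.submatrix id g).mulVec w := by
  funext i0
  simp only [Matrix.mulVec, dotProduct, Matrix.submatrix_apply, id]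
  simp_rw [Finset.mul_sum, mul_ite, mul_zero]
  rw [Finset.sum_comm]
  congr 1; funext i
  simp

lemma Uvec_kernel (A : Matrix (Fin m) (Fin n) ℤ) (g : Fin m ↪ Fin n) (j : Fin n) :
    A.mulVec (Uvec A g j) = 0 := by
  have h2 : A.mulVec (fun k => ∑ i, if g i = k then
      ((A.submatrix id g).adjugate.mulVec (fun i' => A i' j)) i else 0)
      = (A.submatrix id g).det • (fun i' => A i' j) := by
    rw [expand_mulVec', Matrix.mulVec_mulVec, Matrix.mul_adjugate, Matrix.smul_mulVec,
      Matrix.one_mulVec]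
  have h1 : A.mulVec (fun k => if k = j then (A.submatrix id g).det else 0)
      = (A.submatrix id g).det • (fun i' => A i' j) := by
    funext i0
    simp only [Matrix.mulVec, dotProduct, Pi.smul_apply, smul_eq_mul]
    rw [Finset.sum_congr rfl (fun k _ => by rw [mul_ite, mul_zero]), Finset.sum_ite_eq'
      Finset.univ j (fun k => A i0 k * (A.submatrix id g).det)]
    simp [mul_comm]
  have : Uvec A g j = (fun k => if k = j then (A.submatrix id g).det else 0) -
      (fun k => ∑ i, if g i = k then
        ((A.submatrix id g).adjugate.mulVec (fun i' => A i' j)) i else 0) := rfl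
  rw [this, Matrix.mulVec_sub, h1, h2, sub_self]

lemma Uvec_offdiag (A : Matrix (Fin m) (Fin n) ℤ) (g : Fin m ↪ Fin n) (j j' : Fin n)
    (hj' : ∀ i, g i ≠ j') : Uvec A g j j' = if j' = j then (A.submatrix id g).det else 0 := by
  simp [Uvec, hj']
lemma cover (A : Matrix (Fin m) (Fin n) ℤ) (g : Fin m ↪ Fin n)
    (hd : (A.submatrix id g).det ≠ 0) :
    ∃ σ : ℝ, 1 ≤ σ ∧ ∀ x : Fin n → ℝ, (Amap A).mulVec x = 0 →
      ∃ l : Fin n → ℤ, A.mulVec l = 0 ∧ ∀ k, |x k - (l k : ℝ)| ≤ σ := by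
  classical
  set d := (A.submatrix id g).det with hdd
  set s : Finset (Fin n) := Finset.univ.filter (fun j : Fin n => ∀ i, g i ≠ j) with hs
  refine ⟨1 + ∑ j ∈ s, ∑ k, |((Uvec A g j k : ℤ) : ℝ)|, ?_, ?_⟩
  · have : (0:ℝ) ≤ ∑ j ∈ s, ∑ k, |((Uvec A g j k : ℤ) : ℝ)| :=
      Finset.sum_nonneg fun j _ => Finset.sum_nonneg fun k _ => abs_nonneg _
    linarith
  intro x hx
  set c : Fin n → ℝ := fun j => x j / (d : ℝ) with hc
  have hdR : ((d : ℝ)) ≠ 0 := Int.cast_ne_zero.mpr hd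
  have hker : ∀ j, (Amap A).mulVec (fun k => ((Uvec A g j k : ℤ) : ℝ)) = 0 := by
    intro j
    rw [cast_mulVec A (Uvec A g j), Uvec_kernel]
    funext i; simp
  set w : Fin n → ℝ := fun k => x k - ∑ j ∈ s, c j * ((Uvec A g j k : ℤ) : ℝ) with hw
  have hw0 : (Amap A).mulVec w = 0 := by
    have hweq : w = x - ∑ j ∈ s, c j • (fun k => ((Uvec A g j k : ℤ) : ℝ)) := by
      funext k
      simp [hw, Finset.sum_apply]
    rw [hweq, Matrix.mulVec_sub, hx]
    have hz : (Amap A).mulVec (∑ j ∈ s, c j • (fun k => ((Uvec A g j k : ℤ) : ℝ))) = 0 := by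
      rw [← Matrix.mulVecLin_apply, map_sum]
      refine Finset.sum_eq_zero fun j _ => ?_
      rw [_root_.map_smul, Matrix.mulVecLin_apply, hker j, smul_zero]
    rw [hz, sub_zero]
  have hwns : ∀ j' ∈ s, w j' = 0 := by
    intro j' hj'
    have hgj' : ∀ i, g i ≠ j' := (Finset.mem_filter.mp hj').2
    have hsum : ∑ j ∈ s, c j * ((Uvec A g j j' : ℤ) : ℝ) = c j' * (d : ℝ) := by
      have heach : ∀ j ∈ s, c j * ((Uvec A g j j' : ℤ) : ℝ)
          = if j' = j then c j * (d : ℝ) else 0 := by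
        intro j _
        rw [Uvec_offdiag A g j j' hgj']
        split <;> simp [hdd]
      rw [Finset.sum_congr rfl heach, Finset.sum_ite_eq s j' (fun j => c j * (d:ℝ)), if_pos hj']
    simp only [hw]
    rw [hsum, hc]
    field_simp
    ring
  have hB : ((Amap A).submatrix id g).mulVec (fun i => w (g i)) = 0 := by
    funext i0
    have h0 : ∑ k, (Amap A) i0 k * w k = 0 := by
      have := congrFun hw0 i0
      simpa [Matrix.mulVec, dotProduct] using this
    have hsplit2 := Finset.sum_filter_add_sum_filter_not Finset.univ
      (fun j : Fin n => ∀ i, g i ≠ j) (fun k => (Amap A) i0 k * w k)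
    rw [← hs] at hsplit2
    have hz1 : ∑ k ∈ s, (Amap A) i0 k * w k = 0 :=
      Finset.sum_eq_zero fun k hk => by rw [hwns k hk, mul_zero]
    rw [hz1, zero_add, h0] at hsplit2
    have himg : Finset.univ.filter (fun j : Fin n => ¬ ∀ i, g i ≠ j)
        = Finset.univ.image g := by
      ext k
      simp only [Finset.mem_filter, Finset.mem_univ, true_and, Finset.mem_image]
      push_neg
      aesop
    rw [himg, Finset.sum_image (fun i _ j _ h => g.injective h)] at hsplit2
    simpa [Matrix.mulVec, dotProduct] using hsplit2
  have hwg : ∀ i, w (g i) = 0 := by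
    have hdetB : ((Amap A).submatrix id g).det = (d : ℝ) := by
      have hmm : (Amap A).submatrix id g
          = (Int.castRingHom ℝ).mapMatrix (A.submatrix id g) := rfl
      rw [hmm, ← RingHom.map_det]
      rfl
    have hunit : IsUnit ((Amap A).submatrix id g).det := by
      rw [hdetB]; exact isUnit_iff_ne_zero.mpr hdR
    have hinv := Matrix.nonsing_inv_mul ((Amap A).submatrix id g) hunit
    intro i
    calc w (g i) = ((1 : Matrix (Fin m) (Fin m) ℝ).mulVec (fun i => w (g i))) i := by
          rw [Matrix.one_mulVec]
      _ = ((((Amap A).submatrix id g)⁻¹ * ((Amap A).submatrix id g)).mulVec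
          (fun i => w (g i))) i := by rw [hinv]
      _ = (((Amap A).submatrix id g)⁻¹.mulVec (((Amap A).submatrix id g).mulVec
          (fun i => w (g i)))) i := by rw [Matrix.mulVec_mulVec]
      _ = 0 := by rw [hB, Matrix.mulVec_zero]; rfl
  have hwzero : ∀ k, w k = 0 := by
    intro k
    by_cases hk : ∀ i, g i ≠ k
    · exact hwns k (Finset.mem_filter.mpr ⟨Finset.mem_univ _, hk⟩)
    · push_neg at hk
      obtain ⟨i, hi⟩ := hk
      rw [← hi]; exact hwg i
  have hrep : ∀ k, x k = ∑ j ∈ s, c j * ((Uvec A g j k : ℤ) : ℝ) := by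
    intro k
    have := hwzero k
    simp only [hw] at this
    linarith
  refine ⟨fun k => ∑ j ∈ s, ⌊c j⌋ * Uvec A g j k, ?_, ?_⟩
  · have hl : (fun k => ∑ j ∈ s, ⌊c j⌋ * Uvec A g j k)
        = ∑ j ∈ s, ⌊c j⌋ • Uvec A g j := by
      funext k; simp [Finset.sum_apply]
    rw [hl, ← Matrix.mulVecLin_apply, map_sum]
    refine Finset.sum_eq_zero fun j _ => ?_
    rw [_root_.map_smul, Matrix.mulVecLin_apply, Uvec_kernel, smul_zero]
  · intro k
    have hcast : ((∑ j ∈ s, ⌊c j⌋ * Uvec A g j k : ℤ) : ℝ)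
        = ∑ j ∈ s, (⌊c j⌋ : ℝ) * ((Uvec A g j k : ℤ) : ℝ) := by push_cast; rfl
    rw [hcast, hrep k, ← Finset.sum_sub_distrib]
    have hbound : ∀ j ∈ s, |c j * ((Uvec A g j k : ℤ) : ℝ)
        - (⌊c j⌋ : ℝ) * ((Uvec A g j k : ℤ) : ℝ)| ≤ |((Uvec A g j k : ℤ) : ℝ)| := by
      intro j _
      rw [← sub_mul, abs_mul]
      have h1 : |c j - (⌊c j⌋ : ℝ)| ≤ 1 := by
        rw [abs_of_nonneg (by linarith [Int.floor_le (c j)])]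
        linarith [Int.lt_floor_add_one (c j)]
      nlinarith [abs_nonneg ((Uvec A g j k : ℤ) : ℝ), abs_nonneg (c j - (⌊c j⌋ : ℝ))]
    calc |∑ j ∈ s, (c j * ((Uvec A g j k : ℤ) : ℝ) - (⌊c j⌋ : ℝ) * ((Uvec A g j k : ℤ) : ℝ))|
        ≤ ∑ j ∈ s, |c j * ((Uvec A g j k : ℤ) : ℝ) - (⌊c j⌋ : ℝ) * ((Uvec A g j k : ℤ) : ℝ)| :=
          Finset.abs_sum_le_sum_abs _ _
      _ ≤ ∑ j ∈ s, |((Uvec A g j k : ℤ) : ℝ)| := Finset.sum_le_sum hbound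
      _ ≤ ∑ j ∈ s, ∑ k', |((Uvec A g j k' : ℤ) : ℝ)| :=
          Finset.sum_le_sum fun j _ =>
            Finset.single_le_sum (fun k' _ => abs_nonneg ((Uvec A g j k' : ℤ) : ℝ))
              (Finset.mem_univ k)
      _ ≤ 1 + ∑ j ∈ s, ∑ k', |((Uvec A g j k' : ℤ) : ℝ)| := by linarith

end FrobAux2

theorem feasible_of_ge_inhomMin (m n : ℕ) (hm : 1 ≤ m) (hmn : m < n)
    (A : Matrix (Fin m) (Fin n) ℤ) (hreg : Regular A) :
    (∀ t : ℝ, inhomMinPerp A ≤ t →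
      ∀ b : Fin m → ℤ, ((fun i => (b i : ℝ)) - t • colSum A) ∈ cone A → Feasible A b) ∧
    diagFrob A ≤ inhomMinPerp A := by
  classical
  obtain ⟨hgcd, _hpos⟩ := hreg
  -- a nonzero maximal minor exists
  have hex : ∃ g : Fin m ↪ Fin n, (A.submatrix id g).det ≠ 0 := by
    by_contra h
    push_neg at h
    have h0 : Finset.gcd Finset.univ (fun g : Fin m ↪ Fin n => (A.submatrix id g).det) = 0 :=
      Finset.gcd_eq_zero_iff.mpr fun g _ => h g
    rw [hgcd] at h0
    exact one_ne_zero h0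
  obtain ⟨g, hdg⟩ := hex
  obtain ⟨σ0, hσ01, hcov⟩ := FrobAux2.cover A g hdg
  set S : Set ℝ := {σ : ℝ | 0 ≤ σ ∧ ∀ x : Fin n → ℝ, (Amap A).mulVec x = 0 →
    ∃ l : Fin n → ℤ, A.mulVec l = 0 ∧
      ∃ s ∈ (fun p => p - (1 : Fin n → ℝ)) ''
        {x : Fin n → ℝ | (∀ i, 0 ≤ x i) ∧ (Amap A).mulVec x = colSum A},
        x = (fun i => (l i : ℝ)) + σ • s} with hSdef
  have hμS : inhomMinPerp A = sInf S := rfl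
  have hσ0pos : (0:ℝ) < σ0 := lt_of_lt_of_le one_pos hσ01
  -- σ0 belongs to S
  have hσ0mem : σ0 ∈ S := by
    refine ⟨le_of_lt hσ0pos, fun x hx => ?_⟩
    obtain ⟨l, hl, hlb⟩ := hcov x hx
    have hklR : (Amap A).mulVec (fun k => (l k : ℝ)) = 0 := by
      rw [FrobAux2.cast_mulVec, hl]; funext i; simp
    refine ⟨l, hl, fun k => (x k - (l k : ℝ)) / σ0,
      ⟨fun k => (x k - (l k : ℝ)) / σ0 + 1, ⟨?_, ?_⟩, by funext k; simp⟩, ?_⟩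
    · intro k
      have h1 : -σ0 ≤ x k - (l k : ℝ) := neg_le_of_abs_le (hlb k)
      have h2 : (-1 : ℝ) ≤ (x k - (l k : ℝ)) / σ0 := by
        rw [le_div_iff₀ hσ0pos]
        linarith
      linarith
    · have heq : (fun k => (x k - (l k : ℝ)) / σ0 + 1)
          = σ0⁻¹ • (x - fun k => (l k : ℝ)) + (1 : Fin n → ℝ) := by
        funext k
        simp [div_eq_inv_mul]
      rw [heq, Matrix.mulVec_add, Matrix.mulVec_smul, Matrix.mulVec_sub, hx, hklR, sub_self,
        smul_zero, zero_add]
      rfl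
    · funext k
      have : σ0 * ((x k - (l k : ℝ)) / σ0) = x k - (l k : ℝ) := by
        field_simp
      simp only [Pi.add_apply, Pi.smul_apply, smul_eq_mul]
      rw [this]
      ring
  have hSne : S.Nonempty := ⟨σ0, hσ0mem⟩
  have hμ0 : 0 ≤ inhomMinPerp A := by
    rw [hμS]
    exact le_csInf hSne fun σ hσ => hσ.1
  -- the main feasibility claim
  have hmain : ∀ t : ℝ, inhomMinPerp A ≤ t →
      ∀ b : Fin m → ℤ, ((fun i => (b i : ℝ)) - t • colSum A) ∈ cone A → Feasible A b := by
    intro t ht b hb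
    have ht0 : 0 ≤ t := le_trans hμ0 ht
    have hlt : sInf S < t + 1 := lt_of_le_of_lt (hμS ▸ ht) (by linarith)
    obtain ⟨σ, hσS, hσlt⟩ := exists_lt_of_csInf_lt hSne hlt
    obtain ⟨lam, hlam0, hlameq⟩ := hb
    obtain ⟨z, hz⟩ := FrobAux2.surj_of_gcd_one A hgcd b
    have hzR : (Amap A).mulVec (fun k => (z k : ℝ)) = fun i => (b i : ℝ) := by
      rw [FrobAux2.cast_mulVec, hz]
    set x : Fin n → ℝ := (fun k => (z k : ℝ)) - lam - t • (1 : Fin n → ℝ) with hxdef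
    have hxker : (Amap A).mulVec x = 0 := by
      rw [hxdef, Matrix.mulVec_sub, Matrix.mulVec_sub, hzR, hlameq, Matrix.mulVec_smul]
      have : (Amap A).mulVec (1 : Fin n → ℝ) = colSum A := rfl
      rw [this]
      funext i
      simp
    obtain ⟨l, hlker, s', ⟨p, ⟨hp0, hpv⟩, hps⟩, hxeq⟩ := hσS.2 x hxker
    refine ⟨z - l, ?_, ?_⟩
    · intro k
      have hxk : x k = (l k : ℝ) + σ * (p k - 1) := by
        have := congrFun hxeq k
        rw [← hps] at this
        simpa using this
      have hxk2 : x k = (z k : ℝ) - lam k - t := by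
        rw [hxdef]; simp
      have hcast : ((z k - l k : ℤ) : ℝ) = lam k + σ * p k + (t - σ) := by
        push_cast
        rw [hxk2] at hxk
        linarith [hxk]
      have hσ0' : 0 ≤ σ := hσS.1
      have hgt : (-1 : ℝ) < ((z k - l k : ℤ) : ℝ) := by
        rw [hcast]
        have h1 : 0 ≤ lam k := hlam0 k
        have h2 : 0 ≤ σ * p k := mul_nonneg hσ0' (hp0 k)
        linarith
      have : (-1 : ℤ) < z k - l k := by exact_mod_cast hgt
      have : 0 ≤ z k - l k := by omega
      simpa using this
    · rw [Matrix.mulVec_sub, hz, hlker, sub_zero]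
  refine ⟨hmain, ?_⟩
  have hbdd : BddBelow {t : ℝ | 0 ≤ t ∧ ∀ b : Fin m → ℤ,
      ((fun i => (b i : ℝ)) - t • colSum A) ∈ cone A → Feasible A b} :=
    ⟨0, fun y hy => hy.1⟩
  exact csInf_le hbdd ⟨hμ0, fun b hb => hmain (inhomMinPerp A) le_rfl b hb⟩
end

section
/- Let K be a 0-symmetric convex body in ℝ^k and L a full-rank lattice in ℝ^k. Then the inhomogeneous minimum satisfies (1/2)λ_k(K,L) ≤ μ(K,L) ≤ (1/2)(λ_1(K,L) + λ_2(K,L) + ... + λ_k(K,L)) (Jarník's inequalities). -/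
open Matrix Pointwise

open Topology

noncomputable section

/-- The `i`-th successive minimum of `K` with respect to the lattice `L`. -/
def succMin {k : ℕ} (K L : Set (EuclideanSpace ℝ (Fin k))) (i : ℕ) : ℝ :=
  sInf {r : ℝ | 0 < r ∧ i ≤ Set.finrank ℝ (L ∩ r • K)}

/-- The inhomogeneous minimum of `K` with respect to `L`: the least `σ ≥ 0` with
`L + σK = ℝ^k`. -/
def inhomMin {k : ℕ} (K L : Set (EuclideanSpace ℝ (Fin k))) : ℝ :=
  sInf {σ : ℝ | 0 ≤ σ ∧ ∀ x : EuclideanSpace ℝ (Fin k), ∃ l ∈ L, ∃ s ∈ K, x = l + σ • s}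

lemma exists_li_of_le_finrank {V : Type*} [AddCommGroup V] [Module ℝ V]
    [FiniteDimensional ℝ V] {s : Set V} {n : ℕ} (h : n ≤ Set.finrank ℝ s) :
    ∃ v : Fin n → V, (∀ i, v i ∈ s) ∧ LinearIndependent ℝ v := by
  obtain ⟨b, hbs, hspan, hli⟩ := exists_linearIndependent ℝ s
  have hbfin : b.Finite := hli.set_finite_of_isNoetherian
  haveI : Fintype b := hbfin.fintype
  have h1 : Module.finrank ℝ (Submodule.span ℝ b) = b.toFinset.card :=
    finrank_span_set_eq_card hli
  have hcard : n ≤ Fintype.card b := by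
    have h2 : Set.finrank ℝ s = Module.finrank ℝ (Submodule.span ℝ s) := rfl
    rw [hspan] at h1
    rw [Set.toFinset_card] at h1
    omega
  let e : Fin n ↪ b :=
    (Fin.castLEEmb hcard).trans (Fintype.equivFin b).symm.toEmbedding
  exact ⟨fun i => (e i : V), fun i => hbs (e i).2, hli.comp e e.injective⟩

lemma li_le_finrank_submodule {V : Type*} [AddCommGroup V] [Module ℝ V]
    [FiniteDimensional ℝ V] {n : ℕ} {v : Fin n → V} (hv : LinearIndependent ℝ v)
    {p : Submodule ℝ V} (hm : ∀ i, v i ∈ p) : n ≤ Module.finrank ℝ p := by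
  have hw : LinearIndependent ℝ (fun i => (⟨v i, hm i⟩ : p)) :=
    LinearIndependent.of_comp p.subtype (by convert hv; rfl)
  simpa using hw.fintype_card_le_finrank

lemma gauge_sum_le' {E : Type*} [AddCommGroup E] [Module ℝ E] {K : Set E}
    (hc : Convex ℝ K) (ha : Absorbent ℝ K) :
    ∀ (n : ℕ) (f : Fin n → E), gauge K (∑ j, f j) ≤ ∑ j, gauge K (f j) := by
  intro n
  induction n with
  | zero => intro f; simp [gauge_zero]
  | succ m ih =>
      intro f
      simp only [Fin.sum_univ_succ]
      exact le_trans (gauge_add_le hc ha _ _) (add_le_add le_rfl (ih _))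

lemma sum_Icc_one_eq (f : ℕ → ℝ) (k : ℕ) :
    ∑ i ∈ Finset.Icc 1 k, f i = ∑ j : Fin k, f (j.1 + 1) := by
  rw [Fin.sum_univ_eq_sum_range (fun j => f (j + 1)) k]
  induction k with
  | zero => simp
  | succ n ih =>
      rw [Finset.sum_range_succ, ← ih, Finset.sum_Icc_succ_top (by omega)]

set_option maxHeartbeats 1600000 in
theorem jarnik_inequalities (k : ℕ) (hk : 1 ≤ k)
    (K : Set (EuclideanSpace ℝ (Fin k)))
    (hKconv : Convex ℝ K) (hKcomp : IsCompact K)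
    (hKint : (0 : EuclideanSpace ℝ (Fin k)) ∈ interior K)
    (hKsymm : ∀ x ∈ K, -x ∈ K)
    (B : Matrix (Fin k) (Fin k) ℝ) (hB : B.det ≠ 0)
    (L : Set (EuclideanSpace ℝ (Fin k)))
    (hL : L = {x | ∃ z : Fin k → ℤ, ∀ i, x i = B.mulVec (fun j => (z j : ℝ)) i}) :
    (1 / 2) * succMin K L k ≤ inhomMin K L ∧
    inhomMin K L ≤ (1 / 2) * ∑ i ∈ Finset.Icc 1 k, succMin K L i := by
  classical
  have h0K : (0 : EuclideanSpace ℝ (Fin k)) ∈ K := interior_subset hKint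
  have hKnhds : K ∈ 𝓝 (0 : EuclideanSpace ℝ (Fin k)) := mem_interior_iff_mem_nhds.1 hKint
  have habs : Absorbent ℝ K := absorbent_nhds_zero hKnhds
  obtain ⟨ε, hε, hball⟩ := Metric.mem_nhds_iff.1 hKnhds
  have hmem_of_norm : ∀ {r : ℝ}, 0 < r → ∀ {x : EuclideanSpace ℝ (Fin k)},
      ‖x‖ < r * ε → x ∈ r • K := by
    intro r hr x hx
    have h1 : r⁻¹ • x ∈ Metric.ball (0 : EuclideanSpace ℝ (Fin k)) ε := by
      rw [mem_ball_zero_iff, norm_smul, norm_inv, Real.norm_eq_abs, abs_of_pos hr,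
        inv_mul_lt_iff₀ hr]
      exact hx
    have h3 : x = r • (r⁻¹ • x) := by rw [smul_smul, mul_inv_cancel₀ hr.ne', one_smul]
    rw [h3]; exact Set.smul_mem_smul_set (hball h1)
  -- gauge lemmas
  have hgsmul : ∀ (a : ℝ) (x : EuclideanSpace ℝ (Fin k)),
      gauge K (a • x) = |a| * gauge K x := by
    intro a x
    rcases le_or_gt 0 a with h | h
    · rw [abs_of_nonneg h, gauge_smul_of_nonneg h, smul_eq_mul]
    · have h2 : a • x = -(|a| • x) := by rw [abs_of_neg h, neg_smul, neg_neg]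
      rw [h2, gauge_neg hKsymm, gauge_smul_of_nonneg (abs_nonneg a), smul_eq_mul]
  have hgle : ∀ {r : ℝ}, 0 < r → ∀ {x}, x ∈ r • K → gauge K x ≤ r := by
    intro r hr x hx
    obtain ⟨s, hs, rfl⟩ := hx
    rw [gauge_smul_of_nonneg hr.le, smul_eq_mul]
    exact mul_le_of_le_one_right hr.le (gauge_le_one_of_mem hs)
  have hgmem : ∀ {r : ℝ}, 0 < r → ∀ {x}, gauge K x < r → x ∈ r • K := by
    intro r hr x hgx
    have h1 : gauge K (r⁻¹ • x) < 1 := by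
      rw [gauge_smul_of_nonneg (inv_nonneg.2 hr.le), smul_eq_mul, inv_mul_lt_iff₀ hr, mul_one]
      exact hgx
    have h2 : r⁻¹ • x ∈ K := gauge_lt_one_subset_self hKconv h0K habs h1
    have h3 : x = r • (r⁻¹ • x) := by rw [smul_smul, mul_inv_cancel₀ hr.ne', one_smul]
    rw [h3]; exact Set.smul_mem_smul_set h2
  have hgadd := gauge_add_le hKconv habs
  have hgnn : ∀ x : EuclideanSpace ℝ (Fin k), 0 ≤ gauge K x := fun x => gauge_nonneg x
  -- the lattice map
  set e : (EuclideanSpace ℝ (Fin k)) ≃ₗ[ℝ] (Fin k → ℝ) :=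
    WithLp.linearEquiv 2 ℝ (Fin k → ℝ) with he
  set ψ : (Fin k → ℝ) →ₗ[ℝ] EuclideanSpace ℝ (Fin k) :=
    e.symm.toLinearMap ∘ₗ B.mulVecLin with hψ
  have hψ_apply : ∀ (y : Fin k → ℝ) (i : Fin k), (ψ y) i = B.mulVec y i := fun y i => rfl
  have hmemL : ∀ x, x ∈ L ↔ ∃ z : Fin k → ℤ, x = ψ (fun j => (z j : ℝ)) := by
    intro x
    rw [hL]
    constructor
    · rintro ⟨z, hz⟩
      exact ⟨z, PiLp.ext fun i => hz i⟩
    · rintro ⟨z, rfl⟩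
      exact ⟨z, fun i => rfl⟩
  have hL_sub : ∀ a ∈ L, ∀ b ∈ L, a - b ∈ L := by
    intro a ha b hb
    obtain ⟨z1, hz1⟩ := (hmemL a).1 ha
    obtain ⟨z2, hz2⟩ := (hmemL b).1 hb
    refine (hmemL _).2 ⟨z1 - z2, ?_⟩
    rw [hz1, hz2, ← map_sub]
    congr 1
    funext j
    push_cast [Pi.sub_apply]
    ring
  have hL_comb : ∀ (n : ℕ) (m : Fin n → ℤ) (w : Fin n → EuclideanSpace ℝ (Fin k)),
      (∀ j, w j ∈ L) → (∑ j, (m j : ℝ) • w j) ∈ L := by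
    intro n m w hw
    choose z hz using fun j => (hmemL (w j)).1 (hw j)
    refine (hmemL _).2 ⟨∑ j, m j • z j, ?_⟩
    have hcast : (fun j' => (((∑ j, m j • z j) j' : ℤ) : ℝ))
        = ∑ j, (m j : ℝ) • (fun j' => (z j j' : ℝ)) := by
      funext j'
      simp only [Finset.sum_apply, Pi.smul_apply, zsmul_eq_mul, Pi.mul_apply,
        Pi.intCast_apply, smul_eq_mul]
      push_cast
      rfl
    rw [hcast, map_sum]
    refine Finset.sum_congr rfl fun j _ => ?_
    rw [_root_.map_smul, ← hz j]
  -- matrix inverse facts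
  have hBunit : IsUnit B.det := isUnit_iff_ne_zero.2 hB
  have hBinv : ∀ y : Fin k → ℝ, B.mulVec ((B⁻¹).mulVec y) = y := by
    intro y; rw [Matrix.mulVec_mulVec, Matrix.mul_nonsing_inv _ hBunit, Matrix.one_mulVec]
  have hBinv' : ∀ y : Fin k → ℝ, (B⁻¹).mulVec (B.mulVec y) = y := by
    intro y; rw [Matrix.mulVec_mulVec, Matrix.nonsing_inv_mul _ hBunit, Matrix.one_mulVec]
  have hψ_surj : ∀ x : EuclideanSpace ℝ (Fin k), x = ψ ((B⁻¹).mulVec (e x)) := by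
    intro x
    apply PiLp.ext; intro i
    rw [hψ_apply, hBinv]
    rfl
  have hinj : Function.Injective ψ := by
    intro a b hab
    have h1 : B.mulVec a = B.mulVec b := by
      have h2 := congrArg e hab
      simpa [hψ, LinearEquiv.apply_symm_apply] using h2
    calc a = (B⁻¹).mulVec (B.mulVec a) := (hBinv' a).symm
    _ = (B⁻¹).mulVec (B.mulVec b) := by rw [h1]
    _ = b := hBinv' b
  -- fundamental domain bound and covering
  have hcont : Continuous ψ := ψ.continuous_of_finiteDimensional
  have hcomp : IsCompact (ψ '' (Set.Icc (0 : Fin k → ℝ) 1)) := (isCompact_Icc).image hcont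
  obtain ⟨M, hM⟩ := hcomp.exists_bound_of_continuousOn continuousOn_id
  have hM0 : 0 ≤ M :=
    le_trans (norm_nonneg _) (hM (ψ 0) ⟨0, Set.mem_Icc.2 ⟨le_rfl, zero_le_one⟩, rfl⟩)
  set Sset : Set ℝ := {σ : ℝ | 0 ≤ σ ∧ ∀ x : EuclideanSpace ℝ (Fin k),
      ∃ l ∈ L, ∃ s ∈ K, x = l + σ • s} with hSset
  have hIM : inhomMin K L = sInf Sset := rfl
  set σ₀ : ℝ := (M + 1) / ε with hσ₀
  have hσ₀pos : 0 < σ₀ := div_pos (by linarith) hε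
  have hSmem : σ₀ ∈ Sset := by
    refine ⟨hσ₀pos.le, fun x => ?_⟩
    set y : Fin k → ℝ := (B⁻¹).mulVec (e x) with hy
    set zf : Fin k → ℤ := fun j => ⌊y j⌋ with hzf
    set l : EuclideanSpace ℝ (Fin k) := ψ (fun j => (zf j : ℝ)) with hl
    have hlL : l ∈ L := (hmemL _).2 ⟨zf, rfl⟩
    have hfrac : (y - fun j => (zf j : ℝ)) ∈ Set.Icc (0 : Fin k → ℝ) 1 := by
      rw [Set.mem_Icc]
      constructor
      · intro j
        simp only [Pi.sub_apply, Pi.zero_apply, hzf, sub_nonneg]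
        exact Int.floor_le (y j)
      · intro j
        simp only [Pi.sub_apply, Pi.one_apply, hzf]
        have := Int.lt_floor_add_one (y j)
        linarith
    have hdiff : x - l = ψ (y - fun j => (zf j : ℝ)) := by
      rw [map_sub, ← hl, hy, ← hψ_surj x]
    have hnorm : ‖x - l‖ ≤ M := by
      rw [hdiff]
      exact hM _ ⟨_, hfrac, rfl⟩
    have hx : x - l ∈ σ₀ • K := by
      refine hmem_of_norm hσ₀pos ?_
      rw [hσ₀, div_mul_cancel₀ _ hε.ne']
      linarith
    obtain ⟨s, hs, hxs⟩ := hx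
    change σ₀ • s = x - l at hxs
    exact ⟨l, hlL, s, hs, by rw [hxs]; abel⟩
  -- monotonicity of dilates
  have hsmulmono : ∀ {r r' : ℝ}, 0 < r → r ≤ r' → r • K ⊆ r' • K := by
    intro r r' hr hrr' x hx
    obtain ⟨s, hs, rfl⟩ := hx
    have hr' : 0 < r' := lt_of_lt_of_le hr hrr'
    have hmem : (r / r') • s ∈ K := hKconv.smul_mem_of_zero_mem h0K hs
      ⟨by positivity, (div_le_one hr').2 hrr'⟩
    have heq : r • s = r' • ((r / r') • s) := by
      rw [smul_smul]; congr 1; field_simp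
    show r • s ∈ r' • K
    rw [heq]; exact Set.smul_mem_smul_set hmem
  set T : ℕ → Set ℝ := fun i => {r : ℝ | 0 < r ∧ i ≤ Set.finrank ℝ (L ∩ r • K)} with hT
  have hsM : ∀ i, succMin K L i = sInf (T i) := fun i => rfl
  have hfr : ∀ s : Set (EuclideanSpace ℝ (Fin k)),
      Set.finrank ℝ s = Module.finrank ℝ (Submodule.span ℝ s) := fun s => rfl
  have hT_up : ∀ i (r r' : ℝ), r ∈ T i → r ≤ r' → r' ∈ T i := by
    rintro i r r' ⟨hr, hrank⟩ hle
    refine ⟨lt_of_lt_of_le hr hle, le_trans hrank ?_⟩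
    exact Set.finrank_mono (Set.inter_subset_inter_right _ (hsmulmono hr hle))
  -- basis vectors of the lattice
  set w : Fin k → EuclideanSpace ℝ (Fin k) :=
    fun j => ψ (fun j' => (((Pi.single j 1 : Fin k → ℤ) j' : ℤ) : ℝ)) with hw
  have hwL : ∀ j, w j ∈ L := fun j => (hmemL _).2 ⟨Pi.single j 1, rfl⟩
  have hcastsingle : ∀ j : Fin k,
      (fun j' => (((Pi.single j 1 : Fin k → ℤ) j' : ℤ) : ℝ)) = Pi.single j (1 : ℝ) := by
    intro j; funext j'
    by_cases h : j' = j
    · subst h; simp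
    · simp [Pi.single_apply, h]
  have hwli : LinearIndependent ℝ w := by
    have hw2 : w = ψ ∘ (fun j => Pi.single j (1 : ℝ)) := by
      funext j; rw [hw]; simp only [Function.comp_apply]; rw [hcastsingle]
    rw [hw2]
    refine LinearIndependent.map' ?_ ψ (LinearMap.ker_eq_bot.2 hinj)
    have hbf := (Pi.basisFun ℝ (Fin k)).linearIndependent
    have : (fun j => Pi.single j (1:ℝ)) = ⇑(Pi.basisFun ℝ (Fin k)) := by
      funext j; rw [Pi.basisFun_apply]
    rw [this]; exact hbf
  -- T k is nonempty
  set Mw : ℝ := (∑ j, ‖w j‖) + 1 with hMw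
  have hMwpos : 0 < Mw := by
    have : 0 ≤ ∑ j, ‖w j‖ := Finset.sum_nonneg fun j _ => norm_nonneg _
    linarith
  have hr₀T : Mw / ε ∈ T k := by
    have hr₀pos : 0 < Mw / ε := div_pos hMwpos hε
    refine ⟨hr₀pos, ?_⟩
    have hsub : ∀ j, w j ∈ L ∩ (Mw / ε) • K := by
      intro j
      refine ⟨hwL j, hmem_of_norm hr₀pos ?_⟩
      rw [div_mul_cancel₀ _ hε.ne']
      have h1 : ‖w j‖ ≤ ∑ j', ‖w j'‖ :=
        Finset.single_le_sum (fun j' _ => norm_nonneg (w j')) (Finset.mem_univ j)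
      linarith
    have h1 : Submodule.span ℝ (Set.range w) ≤ Submodule.span ℝ (L ∩ (Mw / ε) • K) :=
      Submodule.span_mono (Set.range_subset_iff.2 hsub)
    have h2 : Module.finrank ℝ (Submodule.span ℝ (Set.range w)) = k := by
      rw [finrank_span_eq_card hwli]; simp
    rw [hfr]
    calc k = Module.finrank ℝ (Submodule.span ℝ (Set.range w)) := h2.symm
    _ ≤ _ := Submodule.finrank_mono h1
  have hTsub : ∀ i j : ℕ, i ≤ j → T j ⊆ T i := by
    rintro i j hij r ⟨h1, h2⟩
    exact ⟨h1, le_trans hij h2⟩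
  have hTne : ∀ i : ℕ, i ≤ k → (T i).Nonempty := fun i hi => ⟨Mw / ε, hTsub i k hi hr₀T⟩
  have hTbdd : ∀ i : ℕ, BddBelow (T i) := fun i => ⟨0, fun r hr => hr.1.le⟩
  have hlamnn : ∀ i, 0 ≤ succMin K L i := fun i => Real.sInf_nonneg fun r hr => hr.1.le
  have hlammem : ∀ i : ℕ, i ≤ k → ∀ η : ℝ, 0 < η → succMin K L i + η ∈ T i := by
    intro i hi η hη
    have h1 : sInf (T i) < succMin K L i + η := by rw [← hsM i]; linarith
    obtain ⟨t, htT, htlt⟩ := exists_lt_of_csInf_lt (hTne i hi) h1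
    exact hT_up i t _ htT htlt.le
  have hμbdd : BddBelow Sset := ⟨0, fun τ hτ => hτ.1⟩
  have lower : (1 / 2) * succMin K L k ≤ inhomMin K L := by
    rw [hIM]
    refine le_csInf ⟨σ₀, hSmem⟩ ?_
    rintro σ ⟨hσ0, hσcov⟩
    by_contra hcon
    push_neg at hcon
    have hσlam : 2 * σ < succMin K L k := by linarith
    set lam := succMin K L k with hlamdef
    set η : ℝ := (lam - 2 * σ) / 2 with hηdef
    have hηpos : 0 < η := by rw [hηdef]; linarith
    set r : ℝ := lam + η with hrdef
    have hrT : r ∈ T k := hlammem k le_rfl η hηpos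
    have hrpos : 0 < r := hrT.1
    obtain ⟨v, hvmem, hvli⟩ := exists_li_of_le_finrank hrT.2
    set r' : ℝ := (r / 2 + σ + lam) / 2 with hr'def
    have h1 : r / 2 + σ < lam := by rw [hrdef, hηdef]; linarith
    have hr'1 : r / 2 + σ < r' := by rw [hr'def]; linarith
    have hr'2 : r' < lam := by rw [hr'def]; linarith
    have hr'pos : 0 < r' := by
      have : 0 < r / 2 + σ := by linarith
      linarith
    set H := Submodule.span ℝ (L ∩ r' • K) with hH
    have hHlt : Module.finrank ℝ H < k := by
      have hnot : r' ∉ T k := by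
        refine notMem_of_lt_csInf ?_ (hTbdd k)
        rw [← hsM k]
        exact hr'2
      by_contra hge
      push_neg at hge
      exact hnot ⟨hr'pos, by rw [hfr] at *; exact hge⟩
    have hvH : ∀ i, v i ∈ H := by
      intro i
      obtain ⟨hvL, hvK⟩ := hvmem i
      have hgv : gauge K (v i) ≤ r := hgle hrpos hvK
      obtain ⟨l, hlL, s, hs, hxe⟩ := hσcov ((1 / 2 : ℝ) • v i)
      have hgs : gauge K s ≤ 1 := gauge_le_one_of_mem hs
      have hgl : gauge K l ≤ r / 2 + σ := by
        have hle : l = (1 / 2 : ℝ) • v i + (-σ) • s := by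
          rw [neg_smul]
          rw [eq_sub_of_add_eq (hxe.symm)] 
          abel
        rw [hle]
        refine le_trans (hgadd _ _) ?_
        rw [hgsmul, hgsmul]
        have h2 : |(1 / 2 : ℝ)| = 1 / 2 := by norm_num
        have h3 : |(-σ)| = σ := by rw [abs_neg, abs_of_nonneg hσ0]
        rw [h2, h3]
        nlinarith [hgnn (v i), hgnn s]
      have hgw : gauge K (v i - l) ≤ r / 2 + σ := by
        have hle : v i - l = (1 / 2 : ℝ) • v i + σ • s := by
          rw [eq_sub_of_add_eq (hxe.symm)]
          have hhalf : v i = (1 / 2 : ℝ) • v i + (1 / 2 : ℝ) • v i := by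
            rw [← add_smul]; norm_num
          nth_rewrite 1 [hhalf]
          abel
        rw [hle]
        refine le_trans (hgadd _ _) ?_
        rw [hgsmul, hgsmul]
        have h2 : |(1 / 2 : ℝ)| = 1 / 2 := by norm_num
        have h3 : |σ| = σ := abs_of_nonneg hσ0
        rw [h2, h3]
        nlinarith [hgnn (v i), hgnn s]
      have hlH : l ∈ H := Submodule.subset_span ⟨hlL, hgmem hr'pos (lt_of_le_of_lt hgl hr'1)⟩
      have hwL' : v i - l ∈ L := hL_sub _ hvL _ hlL
      have hwH : v i - l ∈ H :=
        Submodule.subset_span ⟨hwL', hgmem hr'pos (lt_of_le_of_lt hgw hr'1)⟩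
      have hvil : v i = l + (v i - l) := by abel
      rw [hvil]
      exact H.add_mem hlH hwH
    have hk2 : k ≤ Module.finrank ℝ H := li_le_finrank_submodule hvli hvH
    omega
  have upper : inhomMin K L ≤ (1 / 2) * ∑ i ∈ Finset.Icc 1 k, succMin K L i := by
    have key : ∀ ε' : ℝ, 0 < ε' →
        inhomMin K L ≤ (1 / 2) * ∑ i ∈ Finset.Icc 1 k, succMin K L i + ((k : ℝ) / 2 + 1) * ε' := by
      intro ε' hε'
      have chain : ∀ i : ℕ, i ≤ k → ∃ v : Fin i → EuclideanSpace ℝ (Fin k),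
          LinearIndependent ℝ v ∧
          ∀ j : Fin i, v j ∈ L ∧ gauge K (v j) ≤ succMin K L (j.1 + 1) + ε' := by
        intro i
        induction i with
        | zero => exact fun _ => ⟨Fin.elim0, linearIndependent_empty_type, fun j => j.elim0⟩
        | succ n ih =>
          intro hik
          obtain ⟨v, hvli, hvm⟩ := ih (le_trans (Nat.le_succ n) hik)
          have hc : succMin K L (n + 1) + ε' ∈ T (n + 1) := hlammem (n + 1) hik ε' hε'
          have hcpos : (0 : ℝ) < succMin K L (n + 1) + ε' := hc.1
          have hwex : ∃ wv ∈ L ∩ (succMin K L (n + 1) + ε') • K,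
              wv ∉ Submodule.span ℝ (Set.range v) := by
            by_contra hno
            push_neg at hno
            have hsub : L ∩ (succMin K L (n + 1) + ε') • K ⊆
                (Submodule.span ℝ (Set.range v) : Set (EuclideanSpace ℝ (Fin k))) := hno
            have h1 : Set.finrank ℝ (L ∩ (succMin K L (n + 1) + ε') • K) ≤ n := by
              rw [hfr]
              have h2 := Submodule.finrank_mono (Submodule.span_le.2 hsub)
              rw [finrank_span_eq_card hvli] at h2
              simpa using h2
            have h3 := hc.2
            omega
          obtain ⟨wv, hwvm, hwvspan⟩ := hwex
          refine ⟨Fin.snoc v wv, linearIndependent_fin_snoc.2 ⟨hvli, hwvspan⟩, ?_⟩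
          intro j
          refine Fin.lastCases ?_ ?_ j
          · rw [Fin.snoc_last]
            exact ⟨hwvm.1, by simpa using hgle hcpos hwvm.2⟩
          · intro j'
            rw [Fin.snoc_castSucc]
            simpa using hvm j'
      obtain ⟨v, hvli, hvm⟩ := chain k le_rfl
      have hcard : Fintype.card (Fin k) = Module.finrank ℝ (EuclideanSpace ℝ (Fin k)) := by
        simp
      haveI : Nonempty (Fin k) := ⟨⟨0, hk⟩⟩
      set b := basisOfLinearIndependentOfCardEqFinrank hvli hcard with hbdef
      have hb : ∀ j, b j = v j := fun j => by
        rw [hbdef, coe_basisOfLinearIndependentOfCardEqFinrank]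
      set S₀ : ℝ := ∑ j : Fin k, (1 / 2) * (succMin K L (j.1 + 1) + ε') with hS₀
      have hS₀nn : 0 ≤ S₀ := by
        rw [hS₀]
        refine Finset.sum_nonneg fun j _ => ?_
        have := hlamnn (j.1 + 1)
        nlinarith
      have hσpos : 0 < S₀ + ε' := by linarith
      have hσS : (S₀ + ε') ∈ Sset := by
        refine ⟨hσpos.le, fun x => ?_⟩
        set cf : Fin k → ℝ := fun j => b.repr x j with hcf
        set l : EuclideanSpace ℝ (Fin k) := ∑ j : Fin k, ((round (cf j) : ℤ) : ℝ) • v j with hl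
        have hlL : l ∈ L := hL_comb k (fun j => round (cf j)) v (fun j => (hvm j).1)
        have hxl : x - l = ∑ j : Fin k, (cf j - ((round (cf j) : ℤ) : ℝ)) • v j := by
          have hx : x = ∑ j : Fin k, cf j • v j := by
            conv_lhs => rw [← b.sum_repr x]
            exact Finset.sum_congr rfl fun j _ => by rw [hb j]
          rw [hl, hx, ← Finset.sum_sub_distrib]
          exact Finset.sum_congr rfl fun j _ => by rw [sub_smul]
        have hgxl : gauge K (x - l) ≤ S₀ := by
          rw [hxl]
          refine le_trans (gauge_sum_le' hKconv habs k _) ?_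
          rw [hS₀]
          refine Finset.sum_le_sum fun j _ => ?_
          rw [hgsmul]
          have h1 : |cf j - ((round (cf j) : ℤ) : ℝ)| ≤ 1 / 2 := abs_sub_round (cf j)
          have h2 : gauge K (v j) ≤ succMin K L (j.1 + 1) + ε' := (hvm j).2
          have h3 := hgnn (v j)
          have h4 : (0:ℝ) ≤ |cf j - ((round (cf j) : ℤ) : ℝ)| := abs_nonneg _
          nlinarith
        have hmem : x - l ∈ (S₀ + ε') • K := hgmem hσpos (by linarith)
        obtain ⟨s, hs, hseq⟩ := hmem
        change (S₀ + ε') • s = x - l at hseq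
        exact ⟨l, hlL, s, hs, by rw [hseq]; abel⟩
      have hle : inhomMin K L ≤ S₀ + ε' := by
        rw [hIM]; exact csInf_le hμbdd hσS
      have hsum : ∑ i ∈ Finset.Icc 1 k, succMin K L i = ∑ j : Fin k, succMin K L (j.1 + 1) :=
        sum_Icc_one_eq (succMin K L) k
      have hS₀eq : S₀ + ε' = (1 / 2) * ∑ i ∈ Finset.Icc 1 k, succMin K L i + ((k : ℝ) / 2 + 1) * ε' := by
        rw [hS₀, hsum]
        have : ∑ j : Fin k, (1 / 2 : ℝ) * (succMin K L (j.1 + 1) + ε')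
            = (1 / 2) * (∑ j : Fin k, succMin K L (j.1 + 1)) + (k : ℝ) * ε' / 2 := by
          have h5 : ∀ j : Fin k, (1 / 2 : ℝ) * (succMin K L (j.1 + 1) + ε')
              = (1 / 2) * succMin K L (j.1 + 1) + ε' / 2 := fun j => by ring
          rw [Finset.sum_congr rfl fun j _ => h5 j, Finset.sum_add_distrib, ← Finset.mul_sum]
          simp only [Finset.sum_const, Finset.card_univ, Fintype.card_fin, nsmul_eq_mul]
          ring
        rw [this]
        ring
      rw [hS₀eq] at hle
      exact hle
    by_contra hcon
    push_neg at hcon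
    set d : ℝ := inhomMin K L - (1 / 2) * ∑ i ∈ Finset.Icc 1 k, succMin K L i with hd
    have hdpos : 0 < d := by rw [hd]; linarith
    have hkpos : (0:ℝ) < (k : ℝ) / 2 + 1 := by positivity
    have := key (d / ((k : ℝ) / 2 + 1) / 2) (by positivity)
    have heq : ((k : ℝ) / 2 + 1) * (d / ((k : ℝ) / 2 + 1) / 2) = d / 2 := by
      field_simp
    rw [heq] at this
    linarith
  exact ⟨lower, upper⟩

end
end
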